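/- (von Neumann–Halperin alternating projections) Let M_1,…,M_r be closed subspaces of a complex Hilbert space H, let P_{M_j} denote the orthogonal projection onto M_j, and let P denote the orthogonal projection onto ⋂_{i=1}^r M_i. Then for every x ∈ H, the iterates (P_{M_1} P_{M_2} ⋯ P_{M_r})^n x converge in norm to P x as n → ∞. -/

import Mathlib

open Filter

namespace VNHaux

/-- Elementary real inequality used in the chain estimate. -/
lemma real_key {n a b s t : ℝ} (hn : 0 ≤ n) (ha : 0 ≤ a) (hb : 0 ≤ b)
    (hs0 : 0 ≤ s) (ht0 : 0 ≤ t) (hs : s ^ 2 ≤ n * a) (ht : t ^ 2 ≤ b) :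
    (s + t) ^ 2 ≤ (n + 1) * (a + b) := by
  rcases eq_or_lt_of_le hn with hn' | hn'
  · have hs2 : s ^ 2 ≤ 0 := by rw [← hn'] at hs; linarith
    have hseq : s = 0 := by nlinarith
    rw [hseq]
    nlinarith
  · have h1 := sq_nonneg (s - n * t)
    have h2 : (0:ℝ) ≤ (n + 1) * (n * a - s ^ 2) :=
      mul_nonneg (by linarith) (by linarith)
    have h3 : (0:ℝ) ≤ (n * (n + 1)) * (b - t ^ 2) :=
      mul_nonneg (by nlinarith) (by linarith)
    have key : 0 ≤ n * ((n + 1) * (a + b) - (s + t) ^ 2) := by nlinarith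
    nlinarith

variable {H : Type*} [NormedAddCommGroup H] [InnerProductSpace ℂ H]

/-- `p` behaves normwise like an orthogonal projection. -/
def Good (p : H →L[ℂ] H) : Prop := ∀ z : H, ‖p z‖ ^ 2 + ‖z - p z‖ ^ 2 = ‖z‖ ^ 2

lemma Good.norm_le {p : H →L[ℂ] H} (hp : Good p) (z : H) : ‖p z‖ ≤ ‖z‖ := by
  have h := hp z
  have h2 : ‖p z‖ ^ 2 ≤ ‖z‖ ^ 2 := by nlinarith [sq_nonneg (‖z - p z‖)]
  exact (pow_le_pow_iff_left₀ (norm_nonneg _) (norm_nonneg _) two_ne_zero).mp h2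

lemma Good.fix_of_norm_eq {p : H →L[ℂ] H} (hp : Good p) {z : H} (h : ‖p z‖ = ‖z‖) :
    p z = z := by
  have h2 := hp z
  rw [h] at h2
  have h3 : ‖z - p z‖ ^ 2 = 0 := by linarith
  have h4 : z - p z = 0 := norm_eq_zero.mp (sq_eq_zero_iff.mp h3)
  have h5 : z = p z := sub_eq_zero.mp h4
  exact h5.symm

/-- The composition of a list of continuous linear maps. -/
def applyList (L : List (H →L[ℂ] H)) : H →L[ℂ] H :=
  L.foldr (fun p q => p.comp q) (ContinuousLinearMap.id ℂ H)

@[simp] lemma applyList_nil (z : H) : applyList ([] : List (H →L[ℂ] H)) z = z := rfl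

@[simp] lemma applyList_cons (p : H →L[ℂ] H) (L : List (H →L[ℂ] H)) (z : H) :
    applyList (p :: L) z = p (applyList L z) := rfl

lemma applyList_eq_foldr : ∀ (L : List (H →L[ℂ] H)) (z : H),
    applyList L z = L.foldr (fun p y => p y) z
  | [], z => rfl
  | p :: L, z => by simp [applyList_eq_foldr L z]

lemma norm_applyList_le : ∀ (L : List (H →L[ℂ] H)), (∀ p ∈ L, Good p) → ∀ z : H,
    ‖applyList L z‖ ≤ ‖z‖
  | [], _, z => le_refl _
  | p :: L, hL, z => by
    have h1 : ‖p (applyList L z)‖ ≤ ‖applyList L z‖ :=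
      (hL p (List.mem_cons_self)).norm_le _
    have h2 : ‖applyList L z‖ ≤ ‖z‖ :=
      norm_applyList_le L (fun q hq => hL q (List.mem_cons_of_mem _ hq)) z
    simpa using h1.trans h2

lemma applyList_fix : ∀ (L : List (H →L[ℂ] H)) (z : H), (∀ p ∈ L, p z = z) →
    applyList L z = z
  | [], z, _ => rfl
  | p :: L, z, h => by
    have hL : applyList L z = z :=
      applyList_fix L z (fun q hq => h q (List.mem_cons_of_mem _ hq))
    simp [hL, h p (List.mem_cons_self)]

/-- Key chain inequality: the distance moved by a product of projections is controlled
by the loss in norm. -/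
lemma chain_ineq : ∀ (L : List (H →L[ℂ] H)), (∀ p ∈ L, Good p) → ∀ z : H,
    ‖z - applyList L z‖ ^ 2 ≤ L.length * (‖z‖ ^ 2 - ‖applyList L z‖ ^ 2)
  | [], _, z => by simp
  | p :: L, hL, z => by
    have hLg : ∀ q ∈ L, Good q := fun q hq => hL q (List.mem_cons_of_mem _ hq)
    have hpg : Good p := hL p (List.mem_cons_self)
    have hs : ‖z - applyList L z‖ ^ 2 ≤
        (L.length : ℝ) * (‖z‖ ^ 2 - ‖applyList L z‖ ^ 2) := chain_ineq L hLg z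
    have ht : ‖applyList L z - p (applyList L z)‖ ^ 2 =
        ‖applyList L z‖ ^ 2 - ‖p (applyList L z)‖ ^ 2 := by
      have := hpg (applyList L z); linarith
    have hwz : ‖applyList L z‖ ≤ ‖z‖ := norm_applyList_le L hLg z
    have ha : 0 ≤ ‖z‖ ^ 2 - ‖applyList L z‖ ^ 2 := by
      nlinarith [norm_nonneg (applyList L z), norm_nonneg z]
    have hb : 0 ≤ ‖applyList L z‖ ^ 2 - ‖p (applyList L z)‖ ^ 2 := by
      rw [← ht]; positivity
    have tri : ‖z - p (applyList L z)‖ ≤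
        ‖z - applyList L z‖ + ‖applyList L z - p (applyList L z)‖ := by
      have he : z - p (applyList L z) =
          (z - applyList L z) + (applyList L z - p (applyList L z)) := by abel
      rw [he]
      exact norm_add_le _ _
    have tri2 : ‖z - p (applyList L z)‖ ^ 2 ≤
        (‖z - applyList L z‖ + ‖applyList L z - p (applyList L z)‖) ^ 2 :=
      pow_le_pow_left₀ (norm_nonneg _) tri 2
    have hkey : (‖z - applyList L z‖ + ‖applyList L z - p (applyList L z)‖) ^ 2 ≤
        ((L.length : ℝ) + 1) * ((‖z‖ ^ 2 - ‖applyList L z‖ ^ 2)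
          + (‖applyList L z‖ ^ 2 - ‖p (applyList L z)‖ ^ 2)) :=
      real_key (Nat.cast_nonneg _) ha hb (norm_nonneg _) (norm_nonneg _) hs (le_of_eq ht)
    have hlen : (((p :: L).length : ℕ) : ℝ) = (L.length : ℝ) + 1 := by
      push_cast [List.length_cons]
      ring
    have happ : applyList (p :: L) z = p (applyList L z) := rfl
    rw [happ, hlen]
    calc ‖z - p (applyList L z)‖ ^ 2
        ≤ (‖z - applyList L z‖ + ‖applyList L z - p (applyList L z)‖) ^ 2 := tri2
      _ ≤ ((L.length : ℝ) + 1) * ((‖z‖ ^ 2 - ‖applyList L z‖ ^ 2)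
          + (‖applyList L z‖ ^ 2 - ‖p (applyList L z)‖ ^ 2)) := hkey
      _ = ((L.length : ℝ) + 1) * (‖z‖ ^ 2 - ‖p (applyList L z)‖ ^ 2) := by ring

lemma fix_all : ∀ (L : List (H →L[ℂ] H)), (∀ p ∈ L, Good p) → ∀ z : H,
    ‖applyList L z‖ = ‖z‖ → applyList L z = z ∧ ∀ p ∈ L, p z = z
  | [], _, z, _ => ⟨rfl, by simp⟩
  | p :: L, hL, z, h => by
    have hLg : ∀ q ∈ L, Good q := fun q hq => hL q (List.mem_cons_of_mem _ hq)
    have hpg : Good p := hL p (List.mem_cons_self)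
    have h1 : ‖p (applyList L z)‖ ≤ ‖applyList L z‖ := hpg.norm_le _
    have h2 : ‖applyList L z‖ ≤ ‖z‖ := norm_applyList_le L hLg z
    have h3 : ‖applyList (p :: L) z‖ = ‖p (applyList L z)‖ := by simp
    rw [h3] at h
    have heq : ‖applyList L z‖ = ‖z‖ := le_antisymm h2 (h ▸ h1)
    obtain ⟨hfix, hall⟩ := fix_all L hLg z heq
    have hpz : p z = z := by
      apply hpg.fix_of_norm_eq
      rw [← heq, ← hfix, h, hfix, heq]
    refine ⟨by simp [hfix, hpz], ?_⟩
    intro q hq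
    rcases List.mem_cons.mp hq with rfl | hq
    · exact hpz
    · exact hall q hq

lemma iterate_sub (T : H →L[ℂ] H) : ∀ (n : ℕ) (a b : H),
    (⇑T)^[n] (a - b) = (⇑T)^[n] a - (⇑T)^[n] b
  | 0, _, _ => rfl
  | n + 1, a, b => by
    simp only [Function.iterate_succ_apply', iterate_sub T n a b, map_sub]

lemma iterate_add (T : H →L[ℂ] H) : ∀ (n : ℕ) (a b : H),
    (⇑T)^[n] (a + b) = (⇑T)^[n] a + (⇑T)^[n] b
  | 0, _, _ => rfl
  | n + 1, a, b => by
    simp only [Function.iterate_succ_apply', iterate_add T n a b, map_add]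

end VNHaux

open VNHaux

/-- von Neumann–Halperin alternating projections: if `M 0, …, M (r-1)` are closed
subspaces of a complex Hilbert space `H`, `P j` is the orthogonal projection onto `M j`
(characterized by `P j x ∈ M j` and `x - P j x ⟂ M j`), and `Q` is the orthogonal
projection onto `⋂ j, M j`, then for every `x ∈ H` the iterates
`(P_{M_1} P_{M_2} ⋯ P_{M_r})ⁿ x` converge in norm to `Q x`. -/
theorem vonNeumann_halperin_alternating_projections
    {H : Type*} [NormedAddCommGroup H] [InnerProductSpace ℂ H] [CompleteSpace H]
    {r : ℕ} (M : Fin r → Submodule ℂ H) (hM : ∀ j, IsClosed (M j : Set H))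
    (P : Fin r → H → H)
    (hP : ∀ j x, P j x ∈ M j ∧ ∀ y ∈ M j, inner ℂ (x - P j x) y = (0 : ℂ))
    (Q : H → H)
    (hQ : ∀ x, Q x ∈ (⨅ i, M i) ∧ ∀ y ∈ (⨅ i, M i), inner ℂ (x - Q x) y = (0 : ℂ)) :
    ∀ x : H,
      Tendsto (fun n : ℕ => (fun z => (List.ofFn P).foldr (fun f y => f y) z)^[n] x)
        atTop (nhds (Q x)) := by
  -- uniqueness of the orthogonal projection
  have uniq : ∀ (j : Fin r) (x u : H), u ∈ M j →
      (∀ y ∈ M j, inner ℂ (x - u) y = (0 : ℂ)) → P j x = u := by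
    intro j x u hu ho
    have h1 := (hP j x).1
    have h2 := (hP j x).2
    have hm : u - P j x ∈ M j := Submodule.sub_mem _ hu h1
    have e1 : inner ℂ (x - u) (u - P j x) = (0 : ℂ) := ho _ hm
    have e2 : inner ℂ (x - P j x) (u - P j x) = (0 : ℂ) := h2 _ hm
    have e3 : inner ℂ (u - P j x) (u - P j x) = (0 : ℂ) := by
      have e4 : inner ℂ ((x - P j x) - (x - u)) (u - P j x) = (0 : ℂ) := by
        rw [inner_sub_left, e1, e2, sub_zero]
      simpa using e4
    have e5 : u - P j x = 0 := inner_self_eq_zero.mp e3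
    exact (sub_eq_zero.mp e5).symm
  -- Pythagoras
  have pyth : ∀ (j : Fin r) (z : H), ‖P j z‖ ^ 2 + ‖z - P j z‖ ^ 2 = ‖z‖ ^ 2 := by
    intro j z
    have h2 : inner ℂ (z - P j z) (P j z) = (0 : ℂ) := (hP j z).2 _ (hP j z).1
    have hz : z = P j z + (z - P j z) := by abel
    have hns := norm_add_sq (𝕜 := ℂ) (P j z) (z - P j z)
    rw [← hz] at hns
    have hre : RCLike.re (inner ℂ (P j z) (z - P j z) : ℂ) = 0 := by
      rw [← inner_conj_symm, h2]
      simp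
    rw [hre] at hns
    linarith
  -- package the projections as continuous linear maps
  have hex : ∀ j : Fin r, ∃ p : H →L[ℂ] H, (∀ x, p x = P j x) ∧ Good p := by
    intro j
    have hadd : ∀ x y : H, P j (x + y) = P j x + P j y := by
      intro x y
      apply uniq j
      · exact Submodule.add_mem _ (hP j x).1 (hP j y).1
      · intro w hw
        have he : (x + y) - (P j x + P j y) = (x - P j x) + (y - P j y) := by abel
        rw [he, inner_add_left, (hP j x).2 w hw, (hP j y).2 w hw, add_zero]
    have hsmul : ∀ (c : ℂ) (x : H), P j (c • x) = c • P j x := by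
      intro c x
      apply uniq j
      · exact Submodule.smul_mem _ _ (hP j x).1
      · intro w hw
        have he : (c • x) - c • P j x = c • (x - P j x) := by rw [smul_sub]
        rw [he, inner_smul_left, (hP j x).2 w hw, mul_zero]
    have hbound : ∀ x : H, ‖P j x‖ ≤ 1 * ‖x‖ := by
      intro x
      have h := pyth j x
      rw [one_mul]
      have h2 : ‖P j x‖ ^ 2 ≤ ‖x‖ ^ 2 := by nlinarith [sq_nonneg (‖x - P j x‖)]
      exact (pow_le_pow_iff_left₀ (norm_nonneg _) (norm_nonneg _) two_ne_zero).mp h2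
    refine ⟨LinearMap.mkContinuous
      { toFun := P j, map_add' := hadd, map_smul' := hsmul } 1 hbound, ?_, ?_⟩
    · intro x; rfl
    · intro z; exact pyth j z
  choose Pc hPc hGood using hex
  -- the composite operator
  set T : H →L[ℂ] H := applyList (List.ofFn Pc) with hT
  have hGoodAll : ∀ p ∈ List.ofFn Pc, Good p := by
    intro p hp
    rw [List.mem_ofFn] at hp
    obtain ⟨j, rfl⟩ := hp
    exact hGood j
  -- identify the iteration function with ⇑T
  have hfold : (fun z => (List.ofFn P).foldr (fun f y => f y) z) = ⇑T := by
    funext z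
    rw [hT, applyList_eq_foldr]
    rw [List.ofFn_eq_map, List.ofFn_eq_map, List.foldr_map, List.foldr_map]
    congr 1
    funext j y
    exact (hPc j y).symm
  intro x
  rw [hfold]
  set S : Submodule ℂ H := ⨅ i, M i with hS
  have hq1 : Q x ∈ S := (hQ x).1
  have hq2 : ∀ y ∈ S, inner ℂ (x - Q x) y = (0 : ℂ) := (hQ x).2
  -- T fixes S
  have hfixS : ∀ z ∈ S, T z = z := by
    intro z hz
    rw [hT]
    apply applyList_fix
    intro p hp
    rw [List.mem_ofFn] at hp
    obtain ⟨j, rfl⟩ := hp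
    rw [hPc j z]
    apply uniq j z z
    · exact (Submodule.mem_iInf M).mp hz j
    · intro y _; simp
  -- T z = z implies z ∈ S
  have hfixed_mem : ∀ z : H, T z = z → z ∈ S := by
    intro z hz
    have hnorm : ‖applyList (List.ofFn Pc) z‖ = ‖z‖ := by rw [← hT, hz]
    obtain ⟨-, hall⟩ := fix_all (List.ofFn Pc) hGoodAll z hnorm
    rw [hS, Submodule.mem_iInf]
    intro j
    have hj : Pc j z = z := hall (Pc j) (by rw [List.mem_ofFn]; exact ⟨j, rfl⟩)
    have hPz : P j z = z := by rw [← hPc j z]; exact hj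
    rw [← hPz]
    exact (hP j z).1
  -- contraction
  have hcontr : ∀ z : H, ‖T z‖ ≤ ‖z‖ := fun z =>
    norm_applyList_le (List.ofFn Pc) hGoodAll z
  have hitercontr : ∀ (n : ℕ) (z : H), ‖(⇑T)^[n] z‖ ≤ ‖z‖ := by
    intro n
    induction n with
    | zero => intro z; simp
    | succ n ih =>
      intro z
      rw [Function.iterate_succ_apply']
      exact (hcontr _).trans (ih z)
  -- asymptotic regularity
  have har : ∀ w : H,
      Tendsto (fun n => ‖(⇑T)^[n] w - (⇑T)^[n+1] w‖) atTop (nhds 0) := by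
    intro w
    set f : ℕ → ℝ := fun n => ‖(⇑T)^[n] w‖ ^ 2 with hf
    have hanti : Antitone f := by
      apply antitone_nat_of_succ_le
      intro n
      have h1 : ‖(⇑T)^[n+1] w‖ ≤ ‖(⇑T)^[n] w‖ := by
        rw [Function.iterate_succ_apply']
        exact hcontr _
      simp only [hf]
      nlinarith [norm_nonneg ((⇑T)^[n] w), norm_nonneg ((⇑T)^[n+1] w)]
    have hbdd : BddBelow (Set.range f) := ⟨0, by rintro y ⟨n, rfl⟩; positivity⟩
    have hlim : Tendsto f atTop (nhds (⨅ n, f n)) := tendsto_atTop_ciInf hanti hbdd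
    have hdiff : Tendsto (fun n => f n - f (n + 1)) atTop (nhds 0) := by
      have h2 : Tendsto (fun n => f (n + 1)) atTop (nhds (⨅ n, f n)) :=
        hlim.comp (tendsto_add_atTop_nat 1)
      have h3 := hlim.sub h2
      simpa using h3
    have hbound : ∀ n, ‖(⇑T)^[n] w - (⇑T)^[n+1] w‖ ≤
        Real.sqrt ((r : ℝ) * (f n - f (n + 1))) := by
      intro n
      have hci := chain_ineq (List.ofFn Pc) hGoodAll ((⇑T)^[n] w)
      have happ : applyList (List.ofFn Pc) ((⇑T)^[n] w) = (⇑T)^[n+1] w := by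
        rw [← hT]
        exact (Function.iterate_succ_apply' (⇑T) n w).symm
      rw [happ] at hci
      have hlen : (((List.ofFn Pc).length : ℕ) : ℝ) = (r : ℝ) := by simp
      rw [hlen] at hci
      have hsq : ‖(⇑T)^[n] w - (⇑T)^[n+1] w‖ =
          Real.sqrt (‖(⇑T)^[n] w - (⇑T)^[n+1] w‖ ^ 2) := by
        rw [Real.sqrt_sq (norm_nonneg _)]
      rw [hsq]
      exact Real.sqrt_le_sqrt hci
    have hsq : Tendsto (fun n => Real.sqrt ((r : ℝ) * (f n - f (n + 1)))) atTop
        (nhds 0) := by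
      have h1 : Tendsto (fun n => (r : ℝ) * (f n - f (n + 1))) atTop (nhds 0) := by
        have h2 := hdiff.const_mul (r : ℝ)
        simpa using h2
      have h3 := h1.sqrt
      simpa using h3
    exact tendsto_of_tendsto_of_tendsto_of_le_of_le tendsto_const_nhds hsq
      (fun n => norm_nonneg _) hbound
  -- strong convergence to zero on the orthogonal complement of S
  have hconv0 : ∀ z : H, (∀ y ∈ S, inner ℂ z y = (0 : ℂ)) →
      Tendsto (fun n => (⇑T)^[n] z) atTop (nhds 0) := by
    intro z hz
    set A : H →L[ℂ] H := ContinuousLinearMap.id ℂ H - T with hA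
    set K : Submodule ℂ H := LinearMap.range (A : H →ₗ[ℂ] H) with hK
    have hKperp : Kᗮ ≤ S := by
      intro u hu
      have h1 : inner ℂ (u - T u) u = (0 : ℂ) := by
        have hmem : u - T u ∈ K := ⟨u, by simp [hA]⟩
        exact (Submodule.mem_orthogonal K u).mp hu _ hmem
      have h2 : (inner ℂ (T u) u : ℂ) = inner ℂ u u := by
        rw [inner_sub_left] at h1
        linear_combination -h1
      have h3 : RCLike.re (inner ℂ (T u) u : ℂ) = ‖u‖ ^ 2 := by
        rw [h2]; exact inner_self_eq_norm_sq u
      have h4 : ‖T u - u‖ ^ 2 ≤ 0 := by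
        have h5 := norm_sub_sq (𝕜 := ℂ) (T u) u
        rw [h3] at h5
        have hc := hcontr u
        nlinarith [norm_nonneg (T u), norm_nonneg u]
      have h5 : T u = u := by
        have h6 : ‖T u - u‖ ^ 2 = 0 := le_antisymm h4 (sq_nonneg _)
        exact sub_eq_zero.mp (norm_eq_zero.mp (sq_eq_zero_iff.mp h6))
      exact hfixed_mem u h5
    have hzSperp : z ∈ Sᗮ := (Submodule.mem_orthogonal' S z).mpr hz
    have hzK : z ∈ closure (K : Set H) := by
      have h1 : Sᗮ ≤ Kᗮᗮ := Submodule.orthogonal_le hKperp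
      have h2 : Kᗮᗮ = K.topologicalClosure := K.orthogonal_orthogonal_eq_closure
      have h3 : z ∈ K.topologicalClosure := by rw [← h2]; exact h1 hzSperp
      rw [← K.topologicalClosure_coe]
      exact h3
    rw [NormedAddCommGroup.tendsto_nhds_zero]
    intro ε hε
    obtain ⟨v, hvK, hvz⟩ := Metric.mem_closure_iff.mp hzK (ε / 2) (by linarith)
    obtain ⟨w, hw⟩ := hvK
    have hvw : v = w - T w := by rw [← hw]; simp [hA]
    have h6 : ∀ᶠ n in atTop, ‖(⇑T)^[n] w - (⇑T)^[n+1] w‖ < ε / 2 := by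
      have h7 := har w
      rw [NormedAddCommGroup.tendsto_nhds_zero] at h7
      filter_upwards [h7 (ε / 2) (by linarith)] with n hn
      simpa using hn
    filter_upwards [h6] with n hn
    have hTv : (⇑T)^[n] v = (⇑T)^[n] w - (⇑T)^[n+1] w := by
      rw [hvw, iterate_sub, Function.iterate_succ_apply]
    have hsplit : ‖(⇑T)^[n] z‖ ≤ ‖(⇑T)^[n] (z - v)‖ + ‖(⇑T)^[n] v‖ := by
      have he : (⇑T)^[n] z = (⇑T)^[n] (z - v) + (⇑T)^[n] v := by
        rw [← iterate_add]
        congr 1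
        abel
      rw [he]
      exact norm_add_le _ _
    have hzv : ‖(⇑T)^[n] (z - v)‖ ≤ ‖z - v‖ := hitercontr n _
    have hzv2 : ‖z - v‖ < ε / 2 := by rw [← dist_eq_norm]; exact hvz
    calc ‖(⇑T)^[n] z‖ ≤ ‖(⇑T)^[n] (z - v)‖ + ‖(⇑T)^[n] v‖ := hsplit
      _ = ‖(⇑T)^[n] (z - v)‖ + ‖(⇑T)^[n] w - (⇑T)^[n+1] w‖ := by rw [hTv]
      _ < ε / 2 + ε / 2 := add_lt_add_of_le_of_lt (hzv.trans hzv2.le) hn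
      _ = ε := by ring
  -- combine
  have hdecomp : ∀ n : ℕ, (⇑T)^[n] x = Q x + (⇑T)^[n] (x - Q x) := by
    intro n
    induction n with
    | zero => simp
    | succ n ih =>
      rw [Function.iterate_succ_apply', Function.iterate_succ_apply', ih, map_add,
        hfixS (Q x) hq1]
  have h0 : Tendsto (fun n => (⇑T)^[n] (x - Q x)) atTop (nhds 0) :=
    hconv0 (x - Q x) hq2
  have hfin := (tendsto_const_nhds (x := Q x) (f := atTop)).add h0
  rw [add_zero] at hfin
  refine hfin.congr fun n => ?_
  exact (hdecomp n).symm
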